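/- For every integer m ≥ 1, every γ ∈ (0, π/2), and every point p ∈ W_γ, there exists a closed 2m-bounce billiard path based at p if and only if γ < π/(2m). -/

import Mathlib

open Real

noncomputable section

/-- The Euclidean plane. -/
abbrev E2 := EuclideanSpace ℝ (Fin 2)

/-- Construct a point of the plane from its coordinates. -/
def pt (x y : ℝ) : E2 := WithLp.toLp 2 ![x, y]

/-- The open wedge of opening angle `γ`, bounded by the horizontal line `{y = 0}`
and the line `{y = x·tan γ}`. -/
def wedge (γ : ℝ) : Set E2 := {p | 0 < p 0 ∧ 0 < p 1 ∧ p 1 < p 0 * Real.tan γ}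

/-- A direction vector of the boundary line: the horizontal line if `horiz`, the
line `{y = x·tan γ}` otherwise. -/
def lineDir (γ : ℝ) (horiz : Bool) : E2 :=
  if horiz then pt 1 0 else pt (Real.cos γ) (Real.sin γ)

/-- Membership of the corresponding boundary line. -/
def onBoundary (γ : ℝ) (horiz : Bool) (p : E2) : Prop :=
  if horiz then p 1 = 0 else p 1 = p 0 * Real.tan γ

/-- The linear reflection of `ℝ²` across the `1`-dimensional subspace spanned by `d`,
applied to `v` (for `d ≠ 0`). -/
def reflDir (d v : E2) : E2 :=
  (2 * (inner ℝ v d : ℝ) / (inner ℝ d d : ℝ)) • d - v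

/-- A closed `n`-bounce billiard path based at the point `p` of the wedge `W_γ`:
a sequence `q 0 = p, q 1, …, q n, q (n+1) = p` with consecutive points distinct,
whose intermediate points lie alternately on the two boundary lines (minus the
vertex), whose open segments lie in the open wedge, and which satisfies the law
of reflection at each bounce. -/
structure ClosedBounce (γ : ℝ) (p : E2) (n : ℕ) where
  q : ℕ → E2
  /-- `horiz k` records whether the `k`-th bounce is on the horizontal line `ℓ₀`. -/
  horiz : ℕ → Bool
  alt : ∀ k, 1 ≤ k → k < n → horiz (k + 1) = !horiz k
  start : q 0 = p
  closes : q (n + 1) = p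
  distinct : ∀ k ≤ n, q k ≠ q (k + 1)
  bounce_ne_vertex : ∀ k, 1 ≤ k → k ≤ n → q k ≠ 0
  onLine : ∀ k, 1 ≤ k → k ≤ n → onBoundary γ (horiz k) (q k)
  segs_in_wedge : ∀ k ≤ n, ∀ t : ℝ, 0 < t → t < 1 →
    (1 - t) • q k + t • q (k + 1) ∈ wedge γ
  reflects : ∀ k, 1 ≤ k → k ≤ n →
    (‖q (k + 1) - q k‖)⁻¹ • (q (k + 1) - q k) =
      reflDir (lineDir γ (horiz k)) ((‖q k - q (k - 1)‖)⁻¹ • (q k - q (k - 1)))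

/-- The total length of a closed `n`-bounce billiard path. -/
def totalLength {γ : ℝ} {p : E2} {n : ℕ} (P : ClosedBounce γ p n) : ℝ :=
  ∑ k ∈ Finset.range (n + 1), ‖P.q (k + 1) - P.q k‖



/-- the complex absolute value, as an absolute value -/
def Complex.abs : AbsoluteValue ℂ ℝ := NormedField.toAbsoluteValue ℂ

lemma Complex.abs_apply (z : ℂ) : Complex.abs z = Real.sqrt (Complex.normSq z) := by
  show ‖z‖ = _
  rw [Complex.norm_def]

lemma Complex.abs_exp_ofReal_mul_I (x : ℝ) : Complex.abs (Complex.exp (x * Complex.I)) = 1 :=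
  Complex.norm_exp_ofReal_mul_I x

lemma Complex.abs_mul_exp_arg_mul_I (x : ℂ) :
    ((Complex.abs x : ℝ) : ℂ) * Complex.exp (x.arg * Complex.I) = x :=
  Complex.norm_mul_exp_arg_mul_I x

@[simp] lemma Complex.abs_ofReal (r : ℝ) : Complex.abs (r : ℂ) = |r| :=
  Complex.norm_real r

@[simp] lemma Complex.abs_conj (z : ℂ) : Complex.abs ((starRingEnd ℂ) z) = Complex.abs z :=
  Complex.norm_conj z

lemma Complex.normSq_eq_abs (z : ℂ) : Complex.normSq z = Complex.abs z ^ 2 :=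
  Complex.normSq_eq_norm_sq z

/-- rotation by angle θ as a complex number -/
def eθ (θ : ℝ) : ℂ := Complex.exp (θ * Complex.I)

@[simp] lemma eθ_re (θ : ℝ) : (eθ θ).re = Real.cos θ := by
  rw [eθ, Complex.exp_mul_I]; simp [Complex.cos_ofReal_re, Complex.sin_ofReal_re]

@[simp] lemma eθ_im (θ : ℝ) : (eθ θ).im = Real.sin θ := by
  rw [eθ, Complex.exp_mul_I]; simp [Complex.cos_ofReal_re, Complex.sin_ofReal_re]

lemma eθ_mul (a b : ℝ) : eθ a * eθ b = eθ (a + b) := by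
  rw [eθ, eθ, eθ, ← Complex.exp_add]; push_cast; ring_nf

@[simp] lemma conj_eθ (a : ℝ) : (starRingEnd ℂ) (eθ a) = eθ (-a) := by
  rw [eθ, eθ, ← Complex.exp_conj]; congr 1; simp

@[simp] lemma eθ_zero : eθ 0 = 1 := by simp [eθ]

@[simp] lemma abs_eθ (a : ℝ) : Complex.abs (eθ a) = 1 := Complex.abs_exp_ofReal_mul_I a

lemma eθ_ne_zero (a : ℝ) : eθ a ≠ 0 := Complex.exp_ne_zero _

/-- the plane as complex numbers -/
def toC (v : E2) : ℂ := ⟨v 0, v 1⟩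

@[simp] lemma toC_re (v : E2) : (toC v).re = v 0 := rfl
@[simp] lemma toC_im (v : E2) : (toC v).im = v 1 := rfl

@[simp] lemma toC_pt (x y : ℝ) : toC (pt x y) = ⟨x, y⟩ := by
  apply Complex.ext <;> simp [toC, pt]

lemma toC_add (a b : E2) : toC (a + b) = toC a + toC b := by
  apply Complex.ext <;> simp [toC]

lemma toC_sub (a b : E2) : toC (a - b) = toC a - toC b := by
  apply Complex.ext <;> simp [toC]

lemma toC_smul (r : ℝ) (a : E2) : toC (r • a) = (r : ℂ) * toC a := by
  apply Complex.ext <;> simp [toC]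

@[simp] lemma toC_zero : toC (0 : E2) = 0 := by
  apply Complex.ext <;> simp [toC]

lemma toC_inj {a b : E2} (h : toC a = toC b) : a = b := by
  ext i
  fin_cases i
  · exact congrArg Complex.re h
  · exact congrArg Complex.im h

lemma abs_toC (v : E2) : Complex.abs (toC v) = ‖v‖ := by
  rw [EuclideanSpace.norm_eq, Complex.abs_apply, Complex.normSq_apply]
  simp [Fin.sum_univ_two, toC, sq_abs]
  ring_nf

lemma inner_toC (v w : E2) : (inner ℝ v w : ℝ) = ((starRingEnd ℂ) (toC v) * toC w).re := by
  rw [PiLp.inner_apply]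
  simp [Fin.sum_univ_two, toC, Complex.mul_re]
  ring


section two
variable {γ : ℝ}

lemma refl_complex (γ : ℝ) (b : Bool) (v : E2) :
    toC (reflDir (lineDir γ b) v) = eθ (2 * (if b then 0 else γ)) * (starRingEnd ℂ) (toC v) := by
  cases b
  · -- slanted line
    have h1 : (inner ℝ (lineDir γ false) (lineDir γ false) : ℝ) = 1 := by
      rw [PiLp.inner_apply]
      simp [Fin.sum_univ_two, lineDir, pt]
    have h2 : (inner ℝ v (lineDir γ false) : ℝ) = v 0 * Real.cos γ + v 1 * Real.sin γ := by
      rw [PiLp.inner_apply]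
      simp [Fin.sum_univ_two, lineDir, pt]
      ring
    rw [reflDir, toC_sub, toC_smul, h1, h2]
    apply Complex.ext
    · simp [lineDir, Complex.mul_re, Complex.mul_im, Real.cos_two_mul, Real.cos_two_mul',
        Real.sin_two_mul, Complex.cos_ofReal_re, Complex.sin_ofReal_re]
      ring
    · simp [lineDir, Complex.mul_re, Complex.mul_im, Real.cos_two_mul, Real.cos_two_mul',
        Real.sin_two_mul, Complex.cos_ofReal_re, Complex.sin_ofReal_re]
      linear_combination (2 * v 1) * Real.sin_sq_add_cos_sq γ
  · -- horizontal line
    have h1 : (inner ℝ (lineDir γ true) (lineDir γ true) : ℝ) = 1 := by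
      rw [PiLp.inner_apply]; simp [Fin.sum_univ_two, lineDir, pt]
    have h2 : (inner ℝ v (lineDir γ true) : ℝ) = v 0 := by
      rw [PiLp.inner_apply]; simp [Fin.sum_univ_two, lineDir, pt]
    rw [reflDir, toC_sub, toC_smul, h1, h2]
    apply Complex.ext <;>
      simp [lineDir, Complex.mul_re, Complex.mul_im] <;> ring

lemma wedge_iff (hγ0 : 0 < γ) (hγ1 : γ < π / 2) (p : E2) :
    p ∈ wedge γ ↔ 0 < (toC p).im ∧ (eθ (-γ) * toC p).im < 0 := by
  have hc : 0 < Real.cos γ := Real.cos_pos_of_mem_Ioo ⟨by linarith [pi_pos], hγ1⟩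
  have hs : 0 < Real.sin γ := Real.sin_pos_of_pos_of_lt_pi hγ0 (by linarith [pi_pos])
  have him : (eθ (-γ) * toC p).im = Real.cos γ * p 1 - Real.sin γ * p 0 := by
    simp [Complex.mul_im]; ring
  rw [him]
  constructor
  · rintro ⟨h0, h1, h2⟩
    refine ⟨h1, ?_⟩
    rw [Real.tan_eq_sin_div_cos] at h2
    have h2' := mul_lt_mul_of_pos_right h2 hc
    rw [mul_assoc, div_mul_cancel₀ _ (ne_of_gt hc)] at h2'
    linarith
  · rintro ⟨h1, h2⟩
    have h1' : 0 < p 1 := h1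
    have h0 : 0 < p 0 := by
      by_contra hcon
      push_neg at hcon
      nlinarith [mul_pos hc h1', mul_nonpos_of_nonneg_of_nonpos hs.le hcon]
    refine ⟨h0, h1', ?_⟩
    rw [Real.tan_eq_sin_div_cos, mul_div_assoc' , lt_div_iff₀ hc]
    linarith

lemma boundary_fix (hγ1 : γ < π / 2) (hγ0 : 0 < γ) {b : Bool} {z : E2}
    (h : onBoundary γ b z) :
    eθ (2 * (if b then 0 else γ)) * (starRingEnd ℂ) (toC z) = toC z := by
  have hc : Real.cos γ ≠ 0 := ne_of_gt (Real.cos_pos_of_mem_Ioo ⟨by linarith [pi_pos], hγ1⟩)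
  cases b
  · simp only [onBoundary, Bool.false_eq_true, if_false] at h
    simp only [Bool.false_eq_true, if_false]
    rw [Real.tan_eq_sin_div_cos] at h
    apply Complex.ext
    · simp [Complex.mul_re, Complex.mul_im, Real.cos_two_mul', Real.sin_two_mul, h]
      field_simp
      linear_combination (z 0) * Real.sin_sq_add_cos_sq γ
    · simp [Complex.mul_re, Complex.mul_im, Real.cos_two_mul', Real.sin_two_mul, h]
      field_simp
      linear_combination (z 0 * Real.sin γ) * Real.sin_sq_add_cos_sq γ
  · simp only [onBoundary, if_true] at h
    simp only [if_true]
    apply Complex.ext <;> simp [h]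

end two
section three

lemma exists_near (x : ℝ) (h : 0 < Real.cos x) : ∃ j : ℤ, |x - 2*π*j| < π/2 := by
  have hπ : (0:ℝ) < π := pi_pos
  refine ⟨round (x / (2*π)), ?_⟩
  set j := round (x / (2*π)) with hjdef
  have h2π : (0:ℝ) < 2*π := by linarith
  have h1 : |x / (2*π) - j| ≤ 1/2 := abs_sub_round _
  have hb : |x - 2*π*j| ≤ π := by
    have h3 : |x / (2*π) - j| * (2*π) ≤ (1/2) * (2*π) :=
      mul_le_mul_of_nonneg_right h1 h2π.le
    have h4 : x - 2*π*j = (x / (2*π) - j) * (2*π) := by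
      field_simp
    rw [h4, abs_mul, abs_of_pos h2π]
    linarith
  have hc : Real.cos (x - 2*π*j) = Real.cos x := by
    have := Real.cos_add_int_mul_two_pi x (-j)
    push_cast at this
    rw [← this]
    ring_nf
  by_contra hcon
  push_neg at hcon
  have : Real.cos |x - 2*π*j| ≤ 0 :=
    Real.cos_nonpos_of_pi_div_two_le_of_le hcon (by linarith)
  rw [Real.cos_abs, hc] at this
  linarith

lemma chain_bound (N : ℕ) (a : ℕ → ℝ) (δ : ℝ)
    (h1 : ∀ k ≤ N, 0 < Real.cos (a k - δ))
    (h2 : ∀ k < N, |a (k+1) - a k| < π/2) :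
    |a N - a 0| < π := by
  have hπ : (0:ℝ) < π := pi_pos
  have key : ∀ k, ∃ jk : ℤ, k ≤ N → |a k - δ - 2*π*jk| < π/2 := by
    intro k
    by_cases hk : k ≤ N
    · obtain ⟨j0, hj0⟩ := exists_near (a k - δ) (h1 k hk)
      exact ⟨j0, fun _ => hj0⟩
    · exact ⟨0, fun h => absurd h hk⟩
  choose j hj using key
  have mono : ∀ k, k < N → j (k+1) = j k := by
    intro k hk
    have A := hj k (le_of_lt hk)
    have B := hj (k+1) (Nat.succ_le_of_lt hk)
    have C := h2 k hk
    have habs : |(2*π)*((j (k+1) : ℝ) - j k)| < 2*π := by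
      have hid : (2*π)*((j (k+1) : ℝ) - j k) =
          (a (k+1) - a k) - (a (k+1) - δ - 2*π*(j (k+1))) + (a k - δ - 2*π*(j k)) := by
        ring
      rw [hid]
      calc |(a (k+1) - a k) - (a (k+1) - δ - 2*π*(j (k+1))) + (a k - δ - 2*π*(j k))|
          ≤ |(a (k+1) - a k) - (a (k+1) - δ - 2*π*(j (k+1)))| + |a k - δ - 2*π*(j k)| :=
            abs_add_le _ _
        _ ≤ |a (k+1) - a k| + |a (k+1) - δ - 2*π*(j (k+1))| + |a k - δ - 2*π*(j k)| := by
            have := abs_sub (a (k+1) - a k) (a (k+1) - δ - 2*π*(j (k+1)))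
            linarith
        _ < 2*π := by linarith
    have hj1 : |((j (k+1) - j k : ℤ) : ℝ)| < 1 := by
      rw [abs_mul, abs_of_pos (by linarith : (0:ℝ) < 2*π)] at habs
      have := (mul_lt_iff_lt_one_right (by linarith : (0:ℝ) < 2*π)).mp habs
      push_cast
      linarith [this]
    have h5 : |j (k+1) - j k| < 1 := by exact_mod_cast hj1
    rw [abs_lt] at h5
    omega
  have jeq : ∀ k ≤ N, j k = j 0 := by
    intro k hk
    induction k with
    | zero => rfl
    | succ i ih =>
      rw [mono i (Nat.lt_of_succ_le hk)]
      exact ih (le_of_lt (Nat.lt_of_succ_le hk))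
  have A := hj N le_rfl
  have B := hj 0 (Nat.zero_le N)
  rw [jeq N le_rfl] at A
  have hid : a N - a 0 = (a N - δ - 2*π*(j 0)) - (a 0 - δ - 2*π*(j 0)) := by ring
  rw [hid]
  calc |(a N - δ - 2*π*(j 0)) - (a 0 - δ - 2*π*(j 0))|
      ≤ |a N - δ - 2*π*(j 0)| + |a 0 - δ - 2*π*(j 0)| := abs_sub _ _
    _ < π := by linarith

lemma arg_wedge {γ : ℝ} (hγ0 : 0 < γ) (hγ1 : γ < π/2) {p : E2} (hp : p ∈ wedge γ) :
    0 < (toC p).arg ∧ (toC p).arg < γ ∧ 0 < Complex.abs (toC p) ∧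
      toC p = (Complex.abs (toC p) : ℝ) * eθ ((toC p).arg) := by
  obtain ⟨h0, h1, h2⟩ := hp
  have hπ : (0:ℝ) < π := pi_pos
  set z := toC p with hz
  have hre : 0 < z.re := h0
  have him : 0 < z.im := h1
  have hz0 : z ≠ 0 := by
    intro hcon
    rw [hcon] at hre
    simp at hre
  have habs : 0 < Complex.abs z := Complex.abs.pos hz0
  have hargpos : 0 < z.arg := by
    rcases lt_or_eq_of_le ((Complex.arg_nonneg_iff).mpr him.le) with h | h
    · exact h
    · exfalso
      have := (Complex.arg_eq_zero_iff).mp h.symm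
      linarith [this.2]
  have hcosarg : 0 < Real.cos z.arg := by
    rw [Complex.cos_arg hz0]
    positivity
  have harglt : z.arg < π / 2 := by
    by_contra hcon
    push_neg at hcon
    have := Real.cos_nonpos_of_pi_div_two_le_of_le hcon
      (by linarith [Complex.arg_le_pi z])
    linarith
  have htan : Real.tan z.arg < Real.tan γ := by
    rw [Complex.tan_arg]
    have hpz : z.im / z.re < Real.tan γ := by
      rw [div_lt_iff₀ hre]
      calc z.im = p 1 := rfl
        _ < p 0 * Real.tan γ := h2
        _ = Real.tan γ * z.re := by rw [mul_comm]; rfl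
    exact hpz
  have hargγ : z.arg < γ :=
    (Real.strictMonoOn_tan.lt_iff_lt
      ⟨by linarith, by linarith⟩ ⟨by linarith, by linarith⟩).mp htan
  exact ⟨hargpos, hargγ, habs, (Complex.abs_mul_exp_arg_mul_I z).symm⟩

end three

section four

/-- sign associated to the parity of the first bounce -/
def bsgn (b : Bool) : ℝ := if b then -1 else 1

/-- whether bounce `k` is on the horizontal line, given that bounce `1` is iff `b` -/
def fB (b : Bool) (k : ℕ) : Bool := if Even k then !b else b

/-- angle of the line of bounce `k` -/
def AB (γ : ℝ) (b : Bool) (k : ℕ) : ℝ := if fB b k then 0 else γ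

/-- the unfolding isometry for segment `k` -/
def Gm (γ : ℝ) (b : Bool) (k : ℕ) (w : ℂ) : ℂ :=
  if Even k then eθ (bsgn b * k * γ) * w
  else eθ (bsgn b * ((k : ℝ) + bsgn b) * γ) * (starRingEnd ℂ) w

/-- the angle of the ray carrying the unfolded bounce point `k` -/
def aB (γ : ℝ) (b : Bool) (k : ℕ) : ℝ := bsgn b * k * γ + (1 - bsgn b) / 2 * γ

lemma eθ_mul_congr {x y z : ℝ} (h : x + y = z) (w : ℂ) :
    eθ x * (eθ y * w) = eθ z * w := by rw [← mul_assoc, eθ_mul, h]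

lemma Gm_zero (γ : ℝ) (b : Bool) (w : ℂ) : Gm γ b 0 w = w := by
  simp [Gm]

lemma Gm_sub (γ : ℝ) (b : Bool) (k : ℕ) (w₁ w₂ : ℂ) :
    Gm γ b k (w₁ - w₂) = Gm γ b k w₁ - Gm γ b k w₂ := by
  unfold Gm
  split <;> simp [mul_sub]

lemma Gm_real (γ : ℝ) (b : Bool) (k : ℕ) (r : ℝ) (w : ℂ) :
    Gm γ b k ((r : ℂ) * w) = (r : ℂ) * Gm γ b k w := by
  unfold Gm
  split
  · ring
  · simp only [map_mul, Complex.conj_ofReal]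
    ring

lemma Gm_abs (γ : ℝ) (b : Bool) (k : ℕ) (w : ℂ) :
    Complex.abs (Gm γ b k w) = Complex.abs w := by
  unfold Gm
  split <;> simp [map_mul]

lemma Gm_step (γ : ℝ) (b : Bool) (k : ℕ) (w : ℂ) :
    Gm γ b (k+1) w = Gm γ b k (eθ (2 * AB γ b (k+1)) * (starRingEnd ℂ) w) := by
  rcases Nat.even_or_odd k with he | ho
  · have he' : ¬ Even (k+1) := by simp [Nat.even_add_one, he]
    have hf : fB b (k+1) = b := by simp [fB, he']
    cases b
    · have hA : AB γ false (k+1) = γ := by simp [AB, hf]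
      simp only [Gm, if_neg he', if_pos he, hA, bsgn, Bool.false_eq_true, if_false,
        map_mul, conj_eθ, Complex.conj_conj, ← mul_assoc, eθ_mul]
      push_cast
      ring_nf
    · have hA : AB γ true (k+1) = 0 := by simp [AB, hf]
      simp only [Gm, if_neg he', if_pos he, hA, bsgn, if_true, mul_zero,
        map_mul, conj_eθ, Complex.conj_conj, neg_zero, eθ_zero, one_mul, map_one,
        ← mul_assoc, eθ_mul]
      push_cast
      ring_nf
  · have he' : Even (k+1) := Nat.even_add_one.mpr (by simpa using ho)
    have hno : ¬ Even k := by simpa using ho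
    have hf : fB b (k+1) = !b := by simp [fB, he']
    cases b
    · have hA : AB γ false (k+1) = 0 := by simp [AB, hf]
      simp only [Gm, if_pos he', if_neg hno, hA, bsgn, Bool.false_eq_true, if_false,
        mul_zero, eθ_zero, one_mul, Complex.conj_conj, map_one, map_mul, conj_eθ,
        ← mul_assoc, eθ_mul]
      push_cast
      ring_nf
    · have hA : AB γ true (k+1) = γ := by simp [AB, hf]
      simp only [Gm, if_pos he', if_neg hno, hA, bsgn, if_true,
        map_mul, conj_eθ, Complex.conj_conj, ← mul_assoc, eθ_mul]
      push_cast
      ring_nf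

lemma Gm_polar_h (γ : ℝ) (b : Bool) (k : ℕ) (hk : fB b k = true) (x : ℝ) :
    Gm γ b k (x : ℂ) = (x : ℂ) * eθ (aB γ b k) := by
  rcases Nat.even_or_odd k with he | ho
  · have hb : b = false := by
      by_contra hb
      rw [Bool.not_eq_false] at hb
      simp [fB, if_pos he, hb] at hk
    subst hb
    simp only [Gm, if_pos he, bsgn, aB, Bool.false_eq_true, if_false]
    rw [show (1:ℝ) * k * γ + (1-1)/2*γ = 1 * k * γ by ring]
    ring
  · have hno : ¬ Even k := by simpa using ho
    have hb : b = true := by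
      by_contra hb
      rw [Bool.not_eq_true] at hb
      simp [fB, if_neg hno, hb] at hk
    subst hb
    simp only [Gm, if_neg hno, bsgn, aB, if_true, Complex.conj_ofReal]
    rw [show (-1:ℝ) * k * γ + (1-(-1))/2*γ = -1 * ((k:ℝ) + -1) * γ by ring]
    ring

lemma Gm_polar_s (γ : ℝ) (b : Bool) (k : ℕ) (hk : fB b k = false) (c : ℝ) :
    Gm γ b k ((c : ℂ) * eθ γ) = (c : ℂ) * eθ (aB γ b k) := by
  rcases Nat.even_or_odd k with he | ho
  · have hb : b = true := by
      by_contra hb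
      rw [Bool.not_eq_true] at hb
      simp [fB, if_pos he, hb] at hk
    subst hb
    simp only [Gm, if_pos he, bsgn, aB, if_true]
    rw [show (-1:ℝ)*(k:ℝ)*γ + (1-(-1))/2*γ = -1*(k:ℝ)*γ + γ from by ring, ← eθ_mul]
    ring
  · have hno : ¬ Even k := by simpa using ho
    have hb : b = false := by
      by_contra hb
      rw [Bool.not_eq_false] at hb
      simp [fB, if_neg hno, hb] at hk
    subst hb
    simp only [Gm, if_neg hno, bsgn, aB, Bool.false_eq_true, if_false,
      map_mul, conj_eθ, Complex.conj_ofReal]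
    rw [show (1:ℝ)*k*γ + (1-1)/2*γ = 1*((k:ℝ)+1)*γ + -γ from by ring, ← eθ_mul]
    ring

lemma Gm_even (γ : ℝ) (b : Bool) (k : ℕ) (he : Even k) (w : ℂ) :
    Gm γ b k w = eθ (bsgn b * k * γ) * w := by
  simp [Gm, if_pos he]

end four

section five

lemma endpoint_nonneg {A B : ℝ} (h : ∀ t : ℝ, 0 < t → t < 1 → 0 < (1-t)*A + t*B) :
    0 ≤ A := by
  by_contra hA
  push_neg at hA
  by_cases hB : B ≤ 0
  · have := h (1/2) (by norm_num) (by norm_num)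
    nlinarith
  · push_neg at hB
    have hAB : A - B < 0 := by linarith
    have hne : A - B ≠ 0 := ne_of_lt hAB
    set t := A / (A - B) with ht
    have ht0 : 0 < t := div_pos_of_neg_of_neg hA hAB
    have ht1 : t < 1 := by
      have h2 : t - 1 = B / (A - B) := by
        rw [ht]
        field_simp
        ring
      have h3 : B / (A - B) < 0 := div_neg_of_pos_of_neg hB hAB
      linarith
    have hval : (1-t)*A + t*B = 0 := by
      rw [ht]
      field_simp
      ring
    have := h t ht0 ht1
    linarith

lemma forward_dir {m : ℕ} (hm : 1 ≤ m) {γ : ℝ} (hγ0 : 0 < γ) (hγ1 : γ < π/2) {p : E2}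
    (hp : p ∈ wedge γ) (P : ClosedBounce γ p (2*m)) : (2*m : ℝ) * γ < π := by
  obtain ⟨hβ0, hβγ, hρ0, hpolar⟩ := arg_wedge hγ0 hγ1 hp
  have hπ : (0:ℝ) < π := pi_pos
  have hcos : 0 < Real.cos γ := Real.cos_pos_of_mem_Ioo ⟨by linarith, hγ1⟩
  set n := 2 * m with hn
  have hn2 : 2 ≤ n := by omega
  have hne : Even n := ⟨m, by omega⟩
  set β := (toC p).arg with hβ
  set ρ := Complex.abs (toC p) with hρdef
  set z : ℕ → ℂ := fun k => toC (P.q k) with hz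
  set b := P.horiz 1 with hb
  have hz0p : z 0 = (ρ : ℂ) * eθ β := by
    rw [hz]
    simp only [P.start]
    exact hpolar
  have hz00 : z 0 ≠ 0 := by
    rw [hz0p]
    apply mul_ne_zero
    · exact_mod_cast ne_of_gt hρ0
    · exact eθ_ne_zero β
  -- the bounce-parity pattern
  have hf : ∀ k, 1 ≤ k → k ≤ n → P.horiz k = fB b k := by
    intro k hk1 hkn
    induction k with
    | zero => omega
    | succ i ih =>
      rcases Nat.lt_or_ge 1 (i+1) with h1 | h1
      · have hi1 : 1 ≤ i := by omega
        have hin : i < n := by omega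
        rw [P.alt i hi1 hin, ih hi1 (by omega)]
        rcases Nat.even_or_odd i with he | ho
        · have : ¬ Even (i+1) := by simp [Nat.even_add_one, he]
          simp [fB, if_pos he, this]
        · have hno : ¬ Even i := by simpa using ho
          have : Even (i+1) := Nat.even_add_one.mpr hno
          simp [fB, hno, this]
      · have : i = 0 := by omega
        subst this
        have : ¬ Even 1 := by decide
        simp [fB, this, hb]
  -- lengths
  set L : ℕ → ℝ := fun k => ‖P.q (k+1) - P.q k‖ with hL
  have hLpos : ∀ k, k ≤ n → 0 < L k := by
    intro k hk
    simp only [hL, norm_pos_iff]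
    exact sub_ne_zero.mpr (Ne.symm (P.distinct k hk))
  have hLabs : ∀ k, Complex.abs (z (k+1) - z k) = L k := by
    intro k
    simp only [hz, hL, ← toC_sub, abs_toC]
  set u : ℂ := (((L 0)⁻¹ : ℝ) : ℂ) * (z 1 - z 0) with hu
  have habsu : Complex.abs u = 1 := by
    rw [hu, map_mul, hLabs, Complex.abs_ofReal, abs_inv,
      abs_of_pos (hLpos 0 (by omega))]
    exact inv_mul_cancel₀ (ne_of_gt (hLpos 0 (by omega)))
  have hu0 : u ≠ 0 := by
    intro hcon
    rw [hcon] at habsu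
    simp at habsu
  -- complex form of the reflection law
  have reflC : ∀ k, 1 ≤ k → k ≤ n →
      (((L k)⁻¹ : ℝ) : ℂ) * (z (k+1) - z k)
        = eθ (2 * AB γ b k) *
          (starRingEnd ℂ) ((((L (k-1))⁻¹ : ℝ) : ℂ) * (z k - z (k-1))) := by
    intro k h1 h2
    obtain ⟨i, rfl⟩ : ∃ i, k = i + 1 := ⟨k - 1, by omega⟩
    have h3 := congrArg toC (P.reflects (i+1) h1 h2)
    rw [toC_smul, toC_sub, refl_complex, toC_smul, toC_sub, hf (i+1) h1 h2] at h3
    simp only [hz, hL, AB, Nat.add_sub_cancel] at h3 ⊢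
    exact h3
  -- constant unfolded direction
  have dir : ∀ k, k ≤ n → Gm γ b k ((((L k)⁻¹ : ℝ) : ℂ) * (z (k+1) - z k)) = u := by
    intro k
    induction k with
    | zero => intro _; rw [Gm_zero, hu]
    | succ i ih =>
      intro hik
      rw [reflC (i+1) (by omega) hik]
      simp only [Nat.add_sub_cancel]
      rw [Gm_step, map_mul, conj_eθ, Complex.conj_conj, ← mul_assoc, eθ_mul]
      simp only [add_neg_cancel, eθ_zero, one_mul]
      exact ih (by omega)
  -- the segment-step identity
  have hseg : ∀ k, k ≤ n → Gm γ b k (z (k+1)) = Gm γ b k (z k) + ((L k : ℝ) : ℂ) * u := by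
    intro k hk
    have h7 : z (k+1) - z k = ((L k : ℝ) : ℂ) * ((((L k)⁻¹ : ℝ) : ℂ) * (z (k+1) - z k)) := by
      rw [← mul_assoc, ← Complex.ofReal_mul, mul_inv_cancel₀ (ne_of_gt (hLpos k hk)),
        Complex.ofReal_one, one_mul]
    calc Gm γ b k (z (k+1))
        = Gm γ b k (z k) + (Gm γ b k (z (k+1)) - Gm γ b k (z k)) := by ring
      _ = Gm γ b k (z k) + Gm γ b k (z (k+1) - z k) := by rw [← Gm_sub]
      _ = Gm γ b k (z k) + ((L k : ℝ) : ℂ) * u := by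
          rw [h7, Gm_real, dir k hk]
  -- the fixing identity
  have hfix : ∀ k, 1 ≤ k → k ≤ n → Gm γ b k (z k) = Gm γ b (k-1) (z k) := by
    intro k h1 h2
    obtain ⟨i, rfl⟩ : ∃ i, k = i + 1 := ⟨k - 1, by omega⟩
    simp only [Nat.add_sub_cancel]
    rw [Gm_step]
    congr 1
    have honl := P.onLine (i+1) (by omega) h2
    rw [hf (i+1) (by omega) h2] at honl
    simp only [AB]
    exact boundary_fix hγ1 hγ0 honl
  -- unfolded points lie on the line z 0 + T u
  have GA : ∀ k, k ≤ n → Gm γ b k (z k)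
      = z 0 + (((∑ i ∈ Finset.range k, L i) : ℝ) : ℂ) * u := by
    intro k
    induction k with
    | zero => intro _; rw [Gm_zero]; simp
    | succ i ih =>
      intro hik
      have h8 := hfix (i+1) (by omega) hik
      simp only [Nat.add_sub_cancel] at h8
      rw [h8, hseg i (by omega), ih (by omega), Finset.sum_range_succ]
      push_cast
      ring
  have GB : Gm γ b n (z (n+1))
      = z 0 + (((∑ i ∈ Finset.range (n+1), L i) : ℝ) : ℂ) * u := by
    rw [hseg n le_rfl, GA n le_rfl, Finset.sum_range_succ]
    push_cast
    ring
  -- nonnegativity of bounce coordinates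
  have hcoord : ∀ k, 1 ≤ k → k ≤ n → 0 ≤ P.q k 0 ∧ 0 ≤ P.q k 1 := by
    intro k h1 h2
    constructor
    · apply endpoint_nonneg (B := P.q (k+1) 0)
      intro t ht0 ht1
      have h9 := (P.segs_in_wedge k h2 t ht0 ht1).1
      simpa [PiLp.add_apply, PiLp.smul_apply, smul_eq_mul] using h9
    · apply endpoint_nonneg (B := P.q (k+1) 1)
      intro t ht0 ht1
      have h9 := (P.segs_in_wedge k h2 t ht0 ht1).2.1
      simpa [PiLp.add_apply, PiLp.smul_apply, smul_eq_mul] using h9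
  -- polar form of unfolded bounce points
  have hpolarZ : ∀ k, 1 ≤ k → k ≤ n →
      ∃ R : ℝ, 0 < R ∧ Gm γ b k (z k) = (R : ℂ) * eθ (aB γ b k) := by
    intro k h1 h2
    have honl := P.onLine k h1 h2
    rw [hf k h1 h2] at honl
    have hnv : P.q k ≠ 0 := P.bounce_ne_vertex k h1 h2
    obtain ⟨hx0, hy0⟩ := hcoord k h1 h2
    cases hfk : fB b k
    · -- slanted line
      rw [hfk] at honl
      simp only [onBoundary, Bool.false_eq_true, if_false] at honl
      have hxpos : 0 < P.q k 0 := by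
        rcases lt_or_eq_of_le hx0 with h | h
        · exact h
        · exfalso
          apply hnv
          apply toC_inj
          rw [toC_zero]
          apply Complex.ext
          · exact h.symm
          · show P.q k 1 = 0
            rw [honl, ← h, zero_mul]
      refine ⟨P.q k 0 / Real.cos γ, div_pos hxpos hcos, ?_⟩
      have hzk : z k = ((P.q k 0 / Real.cos γ : ℝ) : ℂ) * eθ γ := by
        apply Complex.ext
        · simp only [hz, toC_re, Complex.mul_re, Complex.ofReal_re, Complex.ofReal_im,
            eθ_re, eθ_im]
          field_simp
          ring
        · simp only [hz, toC_im, Complex.mul_im, Complex.ofReal_re, Complex.ofReal_im,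
            eθ_re, eθ_im, honl, Real.tan_eq_sin_div_cos]
          field_simp
          ring
      rw [hzk, Gm_polar_s γ b k hfk]
    · -- horizontal line
      rw [hfk] at honl
      simp only [onBoundary, if_true] at honl
      have hxpos : 0 < P.q k 0 := by
        rcases lt_or_eq_of_le hx0 with h | h
        · exact h
        · exfalso
          apply hnv
          apply toC_inj
          rw [toC_zero]
          apply Complex.ext
          · exact h.symm
          · exact honl
      refine ⟨P.q k 0, hxpos, ?_⟩
      have hzk : z k = ((P.q k 0 : ℝ) : ℂ) := by
        apply Complex.ext
        · simp [hz]
        · simp [hz, honl]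
      rw [hzk, Gm_polar_h γ b k hfk]
  -- the angles
  set a : ℕ → ℝ := fun k => if k = 0 then β else if k ≤ n then aB γ b k
    else β + bsgn b * n * γ with ha
  have hmaster : ∀ k, k ≤ n + 1 → ∃ R : ℝ, 0 < R ∧
      z 0 + (((∑ i ∈ Finset.range k, L i) : ℝ) : ℂ) * u = (R : ℂ) * eθ (a k) := by
    intro k hk
    rcases Nat.eq_zero_or_pos k with h0 | hpos
    · subst h0
      refine ⟨ρ, hρ0, ?_⟩
      simp only [ha, if_pos rfl, Finset.range_zero, Finset.sum_empty]
      push_cast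
      rw [hz0p]
      ring
    rcases le_or_gt k n with hkn | hkn
    · obtain ⟨R, hR, hG⟩ := hpolarZ k hpos hkn
      refine ⟨R, hR, ?_⟩
      rw [← GA k hkn, hG]
      simp only [ha, if_neg (by omega : ¬ k = 0), if_pos hkn]
    · have hk1 : k = n + 1 := by omega
      subst hk1
      refine ⟨ρ, hρ0, ?_⟩
      rw [← GB]
      have hzn1 : z (n+1) = z 0 := by
        simp only [hz, P.closes, P.start]
      rw [hzn1, Gm_even γ b n hne, hz0p]
      simp only [ha, if_neg (by omega : ¬ n + 1 = 0), if_neg (by omega : ¬ n + 1 ≤ n)]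
      rw [show β + bsgn b * (n:ℝ) * γ = bsgn b * (n:ℝ) * γ + β from by ring, ← eθ_mul]
      ring
  -- the line avoids the origin
  have habs2 : ∀ (c1 c2 x y : ℝ), ((c1:ℂ) * eθ x) * ((c2:ℂ) * eθ y)
      = (((c1*c2) : ℝ):ℂ) * eθ (x+y) := by
    intro c1 c2 x y
    rw [← eθ_mul]
    push_cast
    ring
  have ha1 : a 1 = aB γ b 1 := by
    simp only [ha]
    rw [if_neg one_ne_zero, if_pos (by omega)]
  have hsin1 : Real.sin (a 1 - β) ≠ 0 := by
    rw [ha1]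
    cases b
    · simp only [aB, bsgn, Bool.false_eq_true, if_false]
      rw [show (1:ℝ)*(1:ℕ)*γ + (1-1)/2*γ - β = γ - β from by push_cast; ring]
      exact ne_of_gt (Real.sin_pos_of_pos_of_lt_pi (by linarith) (by linarith))
    · simp only [aB, bsgn, if_true]
      rw [show (-1:ℝ)*(1:ℕ)*γ + (1-(-1))/2*γ - β = -β from by push_cast; ring]
      rw [Real.sin_neg]
      exact neg_ne_zero.mpr (ne_of_gt (Real.sin_pos_of_pos_of_lt_pi (by linarith) (by linarith)))
  have hline : ∀ t : ℝ, z 0 + (t : ℂ) * u ≠ 0 := by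
    intro t hcon
    have ht0 : t ≠ 0 := by
      intro h
      rw [h] at hcon
      simp at hcon
      exact hz00 hcon
    have hC : ((starRingEnd ℂ) (z 0) * u).im = 0 := by
      have h10 := congrArg (fun q => ((starRingEnd ℂ) (z 0) * q).im) hcon
      simp only [mul_add, Complex.add_im, mul_zero, Complex.zero_im] at h10
      rw [show (starRingEnd ℂ) (z 0) * ((t:ℂ) * u)
          = (t:ℂ) * ((starRingEnd ℂ) (z 0) * u) from by ring] at h10
      have h11 : ((starRingEnd ℂ) (z 0) * z 0).im = 0 := by
        rw [mul_comm, Complex.mul_conj]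
        simp
      rw [h11, Complex.im_ofReal_mul, zero_add] at h10
      exact (mul_eq_zero.mp h10).resolve_left ht0
    obtain ⟨R1, hR1, h1⟩ := hmaster 1 (by omega)
    have h12 := congrArg (fun q => ((starRingEnd ℂ) (z 0) * q).im) h1
    simp only [mul_add, Complex.add_im] at h12
    have h11 : ((starRingEnd ℂ) (z 0) * z 0).im = 0 := by
      rw [mul_comm, Complex.mul_conj]; simp
    rw [h11, show (starRingEnd ℂ) (z 0) * ((((∑ i ∈ Finset.range 1, L i) : ℝ):ℂ) * u)
        = (((∑ i ∈ Finset.range 1, L i) : ℝ):ℂ) * ((starRingEnd ℂ) (z 0) * u) from by ring,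
      Complex.im_ofReal_mul, hC, mul_zero, zero_add] at h12
    rw [hz0p, map_mul, Complex.conj_ofReal, conj_eθ, habs2] at h12
    rw [Complex.im_ofReal_mul, eθ_im] at h12
    rw [show -β + a 1 = a 1 - β from by ring] at h12
    have : Real.sin (a 1 - β) = 0 := by
      have hρR : ρ * R1 ≠ 0 := ne_of_gt (mul_pos hρ0 hR1)
      exact (mul_eq_zero.mp h12.symm).resolve_left hρR
    exact hsin1 this
  -- foot of the perpendicular from the origin
  set t0 : ℝ := -((starRingEnd ℂ) (z 0) * u).re with ht0def
  set w : ℂ := z 0 + (t0 : ℂ) * u with hwdef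
  have hw0 : w ≠ 0 := hline t0
  have hre1 : ((starRingEnd ℂ) u * u).re = 1 := by
    rw [mul_comm, Complex.mul_conj]
    simp [Complex.normSq_eq_abs, habsu]
  have hwu : ((starRingEnd ℂ) w * u).re = 0 := by
    rw [hwdef, map_add, map_mul, Complex.conj_ofReal, add_mul, Complex.add_re]
    rw [show (t0:ℂ) * (starRingEnd ℂ) u * u = (t0:ℂ) * ((starRingEnd ℂ) u * u) from by ring]
    rw [Complex.re_ofReal_mul, hre1, mul_one, ht0def]
    ring
  have hposT : ∀ s : ℝ, ((starRingEnd ℂ) w * (z 0 + (s:ℂ) * u)).re = Complex.normSq w := by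
    intro s
    have hrw : z 0 + (s:ℂ) * u = w + (((s - t0) : ℝ) : ℂ) * u := by
      rw [hwdef]
      push_cast
      ring
    rw [hrw, mul_add, Complex.add_re, mul_comm ((starRingEnd ℂ) w) w, Complex.mul_conj]
    rw [show (starRingEnd ℂ) w * ((((s - t0) : ℝ):ℂ) * u)
        = (((s - t0) : ℝ):ℂ) * ((starRingEnd ℂ) w * u) from by ring]
    rw [Complex.re_ofReal_mul, hwu, mul_zero, add_zero]
    simp
  set δ := w.arg with hδ
  have hwpolar : (starRingEnd ℂ) w = ((Complex.abs w : ℝ):ℂ) * eθ (-δ) := by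
    conv_lhs => rw [← Complex.abs_mul_exp_arg_mul_I w]
    rw [map_mul, Complex.conj_ofReal]
    congr 1
    rw [show Complex.exp ((w.arg : ℂ) * Complex.I) = eθ w.arg from rfl, conj_eθ]
  have hwabs : 0 < Complex.abs w := Complex.abs.pos hw0
  have hcosb : ∀ k, k ≤ n+1 → 0 < Real.cos (a k - δ) := by
    intro k hk
    obtain ⟨R, hR, hZ⟩ := hmaster k hk
    have h1 : 0 < ((starRingEnd ℂ) w * ((R:ℂ) * eθ (a k))).re := by
      rw [← hZ, hposT]
      exact Complex.normSq_pos.mpr hw0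
    rw [hwpolar, habs2, show -δ + a k = a k - δ from by ring,
      Complex.re_ofReal_mul, eθ_re] at h1
    by_contra hcon
    push_neg at hcon
    nlinarith [mul_pos hwabs hR]
  have hsteps : ∀ k, k < n+1 → |a (k+1) - a k| < π/2 := by
    intro k hk
    rcases Nat.eq_zero_or_pos k with rfl | hkpos
    · have e0 : a 0 = β := by simp [ha]
      rw [ha1, e0]
      cases b
      · simp only [aB, bsgn, Bool.false_eq_true, if_false]
        rw [abs_lt]
        push_cast
        constructor <;> linarith
      · simp only [aB, bsgn, if_true]
        rw [abs_lt]
        push_cast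
        constructor <;> linarith
    rcases Nat.lt_or_ge (k+1) (n+1) with hlt | hge
    · have e1 : a (k+1) = aB γ b (k+1) := by
        simp only [ha]; rw [if_neg (by omega), if_pos (by omega)]
      have e2 : a k = aB γ b k := by
        simp only [ha]; rw [if_neg (by omega), if_pos (by omega)]
      rw [e1, e2, show aB γ b (k+1) - aB γ b k = bsgn b * γ from by
        simp only [aB]; push_cast; ring]
      cases b
      · simp only [bsgn, Bool.false_eq_true, if_false]
        rw [abs_lt]
        constructor <;> linarith
      · simp only [bsgn, if_true]
        rw [abs_lt]
        constructor <;> linarith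
    · have hkn : k = n := by omega
      subst hkn
      have e1 : a (n+1) = β + bsgn b * n * γ := by
        simp only [ha]; rw [if_neg (by omega), if_neg (by omega)]
      have e2 : a n = aB γ b n := by
        simp only [ha]; rw [if_neg (by omega), if_pos le_rfl]
      rw [e1, e2, show β + bsgn b * (n:ℝ) * γ - aB γ b n = β - (1 - bsgn b)/2 * γ from by
        simp only [aB]; ring]
      cases b
      · simp only [bsgn, Bool.false_eq_true, if_false]
        rw [abs_lt]
        constructor <;> linarith
      · simp only [bsgn, if_true]
        rw [abs_lt]
        constructor <;> linarith
  have hchain := chain_bound (n+1) a δ hcosb hsteps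
  have hdiff : a (n+1) - a 0 = bsgn b * n * γ := by
    have e0 : a 0 = β := by simp [ha]
    have e1 : a (n+1) = β + bsgn b * n * γ := by
      simp only [ha]
      rw [if_neg (by omega), if_neg (by omega)]
    rw [e0, e1]
    ring
  rw [hdiff] at hchain
  have hnγ : (n:ℝ) * γ < π := by
    have hpos : 0 < (n:ℝ) * γ := by positivity
    have h1 : |bsgn b| = 1 := by cases b <;> simp [bsgn]
    rw [mul_assoc, abs_mul, h1, one_mul, abs_of_pos hpos] at hchain
    exact hchain
  calc (2*m : ℝ) * γ = (n:ℝ) * γ := by rw [hn]; push_cast; ring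
    _ < π := hnγ

end five

section six

@[simp] lemma pt_0 (x y : ℝ) : pt x y 0 = x := by simp [pt]
@[simp] lemma pt_1 (x y : ℝ) : pt x y 1 = y := by simp [pt]

/-- the inverse folding isometry for segment `k` -/
def invG (γ : ℝ) (k : ℕ) (w : ℂ) : ℂ :=
  if Odd k then (starRingEnd ℂ) (eθ (((k:ℝ)-1)*γ) * w) else eθ ((k:ℝ)*γ) * w

lemma invG_add (γ : ℝ) (k : ℕ) (w₁ w₂ : ℂ) :
    invG γ k (w₁ + w₂) = invG γ k w₁ + invG γ k w₂ := by
  unfold invG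
  split <;> simp [mul_add]

lemma invG_sub (γ : ℝ) (k : ℕ) (w₁ w₂ : ℂ) :
    invG γ k (w₁ - w₂) = invG γ k w₁ - invG γ k w₂ := by
  unfold invG
  split <;> simp [mul_sub]

lemma invG_real (γ : ℝ) (k : ℕ) (r : ℝ) (w : ℂ) :
    invG γ k ((r : ℂ) * w) = (r : ℂ) * invG γ k w := by
  unfold invG
  split
  · simp only [map_mul, Complex.conj_ofReal]
    ring
  · ring

lemma invG_abs (γ : ℝ) (k : ℕ) (w : ℂ) :
    Complex.abs (invG γ k w) = Complex.abs w := by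
  unfold invG
  split <;> simp [map_mul]

lemma invG_inj (γ : ℝ) (k : ℕ) {w₁ w₂ : ℂ} (h : invG γ k w₁ = invG γ k w₂) :
    w₁ = w₂ := by
  unfold invG at h
  split at h
  · have h2 := congrArg (starRingEnd ℂ) h
    simp only [Complex.conj_conj] at h2
    exact mul_left_cancel₀ (eθ_ne_zero _) h2
  · exact mul_left_cancel₀ (eθ_ne_zero _) h

lemma invG_refl (γ : ℝ) (i : ℕ) (D : ℂ) :
    invG γ (i+1) D = eθ (2 * (if Odd (i+1) then 0 else γ)) *
      (starRingEnd ℂ) (invG γ i D) := by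
  rcases Nat.even_or_odd i with he | ho
  · have ho1 : Odd (i+1) := Even.add_one he
    have hno : ¬ Odd i := by simp [Nat.not_odd_iff_even.mpr he]
    simp only [invG, if_pos ho1, if_neg hno, if_true, mul_zero, eθ_zero, one_mul]
    congr 2
    push_cast
    ring
  · have hno1 : ¬ Odd (i+1) := by simp [Nat.odd_add_one, ho]
    simp only [invG, if_neg hno1, if_pos ho, if_false, Complex.conj_conj, map_mul,
      Complex.conj_conj, conj_eθ, ← mul_assoc, eθ_mul]
    congr 2
    push_cast
    ring

lemma mem_wedge_of {γ : ℝ} (hγ0 : 0 < γ) (hγ1 : γ < π/2) (k : ℕ) (W : ℂ) {v : E2}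
    (hv : toC v = invG γ k W)
    (h1 : (eθ (((k:ℝ)-1)*γ) * W).im < 0)
    (h2 : 0 < (eθ ((k:ℝ)*γ) * W).im) :
    v ∈ wedge γ := by
  rw [wedge_iff hγ0 hγ1, hv]
  unfold invG
  split
  · constructor
    · simp only [Complex.conj_im]
      rw [show ((k:ℝ)-1)*γ = ((k:ℝ)-1)*γ from rfl] at h1
      linarith [h1]
    · rw [show eθ (-γ) * (starRingEnd ℂ) (eθ (((k:ℝ)-1)*γ) * W)
          = (starRingEnd ℂ) (eθ γ * (eθ (((k:ℝ)-1)*γ) * W)) from by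
        simp only [map_mul, conj_eθ]]
      rw [← mul_assoc, eθ_mul, show γ + ((k:ℝ)-1)*γ = (k:ℝ)*γ from by ring]
      simp only [Complex.conj_im]
      linarith [h2]
  · constructor
    · exact h2
    · rw [← mul_assoc, eθ_mul, show -γ + (k:ℝ)*γ = ((k:ℝ)-1)*γ from by ring]
      exact h1

end six

section seven

set_option maxHeartbeats 1000000 in
lemma backward_dir {m : ℕ} (hm : 1 ≤ m) {γ : ℝ} (hγ0 : 0 < γ) (hγ1 : γ < π/2) {p : E2}
    (hp : p ∈ wedge γ) (hlt : (2*m : ℝ) * γ < π) :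
    Nonempty (ClosedBounce γ p (2*m)) := by
  obtain ⟨hβ0, hβγ, hρ0, hpolar⟩ := arg_wedge hγ0 hγ1 hp
  have hπ : (0:ℝ) < π := pi_pos
  have hcos : 0 < Real.cos γ := Real.cos_pos_of_mem_Ioo ⟨by linarith, hγ1⟩
  have hsinγ : 0 < Real.sin γ := Real.sin_pos_of_pos_of_lt_pi hγ0 (by linarith)
  set n := 2 * m with hn
  have hn2 : 2 ≤ n := by omega
  have hne : Even n := ⟨m, by omega⟩
  have hnodd : ¬ Odd n := by simp [Nat.not_odd_iff_even.mpr hne]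
  have hnR : (n:ℝ) = 2*(m:ℝ) := by rw [hn]; push_cast; ring
  have hnγπ : (n:ℝ) * γ < π := by rw [hnR]; exact hlt
  have hnγ0 : 0 < (n:ℝ) * γ := by
    have : (0:ℝ) < (n:ℝ) := by exact_mod_cast (by omega : 0 < n)
    positivity
  set β := (toC p).arg with hβ
  set ρ := Complex.abs (toC p) with hρdef
  have hsn : 0 < Real.sin ((n:ℝ)*γ) := Real.sin_pos_of_pos_of_lt_pi hnγ0 hnγπ
  set x : ℕ → ℝ := fun k => β + ((k:ℝ) - 1) * γ with hx
  have hs1 : ∀ k, 1 ≤ k → k ≤ n → 0 < Real.sin (x k) := by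
    intro k h1 h2
    have hk1 : (1:ℝ) ≤ (k:ℝ) := by exact_mod_cast h1
    have hk : (k:ℝ) ≤ (n:ℝ) := by exact_mod_cast h2
    apply Real.sin_pos_of_pos_of_lt_pi
    · simp only [hx]
      nlinarith
    · simp only [hx]
      nlinarith
  have hs2 : ∀ k, 1 ≤ k → k ≤ n → Real.sin (x k - (n:ℝ)*γ) < 0 := by
    intro k h1 h2
    have hk1 : (1:ℝ) ≤ (k:ℝ) := by exact_mod_cast h1
    have hk : (k:ℝ) ≤ (n:ℝ) := by exact_mod_cast h2
    have h3 : x k - (n:ℝ)*γ < 0 := by simp only [hx]; nlinarith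
    have h4 : -π < x k - (n:ℝ)*γ := by simp only [hx]; nlinarith
    have := Real.sin_pos_of_pos_of_lt_pi (x := -(x k - (n:ℝ)*γ)) (by linarith) (by linarith)
    rw [Real.sin_neg] at this
    linarith
  have hd : ∀ k, 1 ≤ k → k ≤ n → 0 < Real.sin (x k) - Real.sin (x k - (n:ℝ)*γ) := by
    intro k h1 h2
    linarith [hs1 k h1 h2, hs2 k h1 h2]
  set tt : ℕ → ℝ := fun k => if k = 0 then 0 else if k ≤ n then
    Real.sin (x k) / (Real.sin (x k) - Real.sin (x k - (n:ℝ)*γ)) else 1 with htt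
  set rr : ℕ → ℝ := fun k =>
    ρ * Real.sin ((n:ℝ)*γ) / (Real.sin (x k) - Real.sin (x k - (n:ℝ)*γ)) with hrr
  have hrrpos : ∀ k, 1 ≤ k → k ≤ n → 0 < rr k := by
    intro k h1 h2
    simp only [hrr]
    exact div_pos (mul_pos hρ0 hsn) (hd k h1 h2)
  set DD : ℂ := (ρ:ℂ) * eθ (β - (n:ℝ)*γ) - (ρ:ℂ) * eθ β with hDD
  set ZZ : ℕ → ℂ := fun k => (ρ:ℂ) * eθ β + ((tt k : ℝ):ℂ) * DD with hZZ
  have htt0 : tt 0 = 0 := by simp [htt]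
  have httlast : tt (n+1) = 1 := by
    simp only [htt]
    rw [if_neg (by omega), if_neg (by omega)]
  have hZZ0 : ZZ 0 = toC p := by
    simp only [hZZ, htt0]
    rw [hpolar]
    push_cast
    ring
  have hZZlast : ZZ (n+1) = (ρ:ℂ) * eθ (β - (n:ℝ)*γ) := by
    simp only [hZZ, httlast]
    push_cast
    rw [hDD]
    ring
  -- polar form of the interior chord points
  have hZZpolar : ∀ k, 1 ≤ k → k ≤ n → ZZ k = ((rr k : ℝ):ℂ) * eθ (-(((k:ℝ)-1)*γ)) := by
    intro k h1 h2
    have hdk := hd k h1 h2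
    have hdkne : Real.sin (x k) - Real.sin (x k - (n:ℝ)*γ) ≠ 0 := ne_of_gt hdk
    have httk : tt k = Real.sin (x k) / (Real.sin (x k) - Real.sin (x k - (n:ℝ)*γ)) := by
      simp only [htt]
      rw [if_neg (by omega), if_pos h2]
    apply mul_left_cancel₀ (eθ_ne_zero (((k:ℝ)-1)*γ))
    rw [show eθ (((k:ℝ)-1)*γ) * (((rr k : ℝ):ℂ) * eθ (-(((k:ℝ)-1)*γ)))
        = ((rr k : ℝ):ℂ) * (eθ (((k:ℝ)-1)*γ) * eθ (-(((k:ℝ)-1)*γ))) from by ring,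
      eθ_mul, add_neg_cancel, eθ_zero, mul_one]
    simp only [hZZ, hDD]
    rw [show eθ (((k:ℝ)-1)*γ) * ((ρ:ℂ) * eθ β + ((tt k : ℝ):ℂ) *
          ((ρ:ℂ) * eθ (β - (n:ℝ)*γ) - (ρ:ℂ) * eθ β))
        = (ρ:ℂ) * (eθ (((k:ℝ)-1)*γ) * eθ β) + ((tt k : ℝ):ℂ) *
          ((ρ:ℂ) * (eθ (((k:ℝ)-1)*γ) * eθ (β - (n:ℝ)*γ)) -
            (ρ:ℂ) * (eθ (((k:ℝ)-1)*γ) * eθ β)) from by ring,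
      eθ_mul, eθ_mul,
      show ((k:ℝ)-1)*γ + β = x k from by simp only [hx]; ring,
      show ((k:ℝ)-1)*γ + (β - (n:ℝ)*γ) = x k - (n:ℝ)*γ from by simp only [hx]; ring]
    have key := Real.sin_sub (x k) (x k - (n:ℝ)*γ)
    rw [show x k - (x k - (n:ℝ)*γ) = (n:ℝ)*γ from by ring] at key
    apply Complex.ext
    · simp only [Complex.add_re, Complex.re_ofReal_mul, Complex.sub_re, eθ_re,
        Complex.ofReal_re]
      rw [httk, hrr]
      field_simp
      linear_combination (-1 : ℝ) * key
    · simp only [Complex.add_im, Complex.im_ofReal_mul, Complex.sub_im, eθ_im,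
        Complex.ofReal_im]
      rw [httk]
      field_simp
      ring
  -- strict monotonicity of the chord parameters
  have httmono : ∀ k, k ≤ n → tt k < tt (k+1) := by
    intro k hk
    rcases Nat.eq_zero_or_pos k with rfl | hkpos
    · rw [htt0]
      simp only [htt]
      rw [if_neg (by omega), if_pos (by omega)]
      exact div_pos (hs1 1 le_rfl (by omega)) (hd 1 le_rfl (by omega))
    rcases Nat.lt_or_ge k n with hlt2 | hge
    · have e1 : tt k = Real.sin (x k) / (Real.sin (x k) - Real.sin (x k - (n:ℝ)*γ)) := by
        simp only [htt]; rw [if_neg (by omega), if_pos (by omega)]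
      have e2 : tt (k+1) = Real.sin (x (k+1)) / (Real.sin (x (k+1)) - Real.sin (x (k+1) - (n:ℝ)*γ)) := by
        simp only [htt]; rw [if_neg (by omega), if_pos (by omega)]
      rw [e1, e2, div_lt_div_iff₀ (hd k (by omega) (by omega)) (hd (k+1) (by omega) (by omega))]
      have hxs : x (k+1) = x k + γ := by simp only [hx]; push_cast; ring
      have key := Real.sin_sub (x k) (x k - (n:ℝ)*γ)
      rw [show x k - (x k - (n:ℝ)*γ) = (n:ℝ)*γ from by ring] at key
      have key2 : Real.sin (x k) * Real.sin ((x k - (n:ℝ)*γ) + γ)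
          - Real.sin (x k + γ) * Real.sin (x k - (n:ℝ)*γ)
          = Real.sin γ * Real.sin ((n:ℝ)*γ) := by
        rw [Real.sin_add (x k - (n:ℝ)*γ) γ, Real.sin_add (x k) γ]
        linear_combination (-Real.sin γ) * key
      rw [hxs, show x k + γ - (n:ℝ)*γ = (x k - (n:ℝ)*γ) + γ from by ring]
      nlinarith [key2, mul_pos hsinγ hsn]
    · have hkn : k = n := by omega
      subst hkn
      have e1 : tt n = Real.sin (x n) / (Real.sin (x n) - Real.sin (x n - (n:ℝ)*γ)) := by
        simp only [htt]; rw [if_neg (by omega), if_pos le_rfl]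
      rw [e1, httlast, div_lt_one (hd n (by omega) le_rfl)]
      linarith [hs2 n (by omega) le_rfl]
  -- the direction is nonzero
  have hDDne : DD ≠ 0 := by
    intro hcon
    rw [hDD, sub_eq_zero] at hcon
    have h1 : eθ (β - (n:ℝ)*γ) = eθ β :=
      mul_left_cancel₀ (by exact_mod_cast ne_of_gt hρ0) hcon
    have h2 : eθ (-((n:ℝ)*γ)) = 1 := by
      have h3 := congrArg (fun z => z * eθ (-β)) h1
      simp only [eθ_mul] at h3
      rw [show β - (n:ℝ)*γ + -β = -((n:ℝ)*γ) from by ring,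
        show β + -β = (0:ℝ) from by ring, eθ_zero] at h3
      exact h3
    rw [eθ, Complex.exp_eq_one_iff] at h2
    obtain ⟨j, hj⟩ := h2
    have h4 : -((n:ℝ)*γ) = (j:ℝ) * (2*π) := by
      have h5 := congrArg Complex.im hj
      simpa using h5
    rcases le_or_gt 0 j with hj0 | hj0
    · have h6 : (0:ℝ) ≤ (j:ℝ) := by exact_mod_cast hj0
      have h7 : (0:ℝ) ≤ (j:ℝ) * (2*π) := mul_nonneg h6 (by linarith)
      linarith
    · have hj1 : (j:ℝ) ≤ -1 := by exact_mod_cast (by omega : j ≤ -1)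
      have h7 : (j:ℝ) * (2*π) ≤ (-1) * (2*π) := mul_le_mul_of_nonneg_right hj1 (by linarith)
      linarith
  -- the path
  set qq : ℕ → E2 := fun k => if k = 0 ∨ k = n+1 then p else if Odd k then pt (rr k) 0
    else pt (rr k * Real.cos γ) (rr k * Real.sin γ) with hqq
  have hfold1 : ∀ k, k ≤ n → toC (qq k) = invG γ k (ZZ k) := by
    intro k hk
    rcases Nat.eq_zero_or_pos k with rfl | hkpos
    · simp only [hqq, if_pos (Or.inl rfl), invG]
      rw [if_neg (by decide : ¬ Odd 0)]
      rw [hZZ0]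
      simp
    have hkne : ¬ (k = 0 ∨ k = n+1) := by omega
    rw [hZZpolar k hkpos hk]
    rcases Nat.even_or_odd k with he | ho
    · have hno : ¬ Odd k := by simp [Nat.not_odd_iff_even.mpr he]
      simp only [hqq, if_neg hkne, if_neg hno, invG]
      rw [show eθ ((k:ℝ)*γ) * (((rr k : ℝ):ℂ) * eθ (-(((k:ℝ)-1)*γ)))
          = ((rr k : ℝ):ℂ) * (eθ ((k:ℝ)*γ) * eθ (-(((k:ℝ)-1)*γ))) from by ring, eθ_mul,
        show (k:ℝ)*γ + -(((k:ℝ)-1)*γ) = γ from by ring]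
      apply Complex.ext
      · simp [Complex.re_ofReal_mul]
      · simp [Complex.im_ofReal_mul]
    · simp only [hqq, if_neg hkne, if_pos ho, invG, if_pos ho]
      rw [show eθ (((k:ℝ)-1)*γ) * (((rr k : ℝ):ℂ) * eθ (-(((k:ℝ)-1)*γ)))
          = ((rr k : ℝ):ℂ) * (eθ (((k:ℝ)-1)*γ) * eθ (-(((k:ℝ)-1)*γ))) from by ring, eθ_mul,
        add_neg_cancel, eθ_zero, mul_one, Complex.conj_ofReal]
      apply Complex.ext
      · simp
      · simp
  have hfold2 : ∀ k, k ≤ n → toC (qq (k+1)) = invG γ k (ZZ (k+1)) := by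
    intro k hk
    rcases Nat.lt_or_ge k n with hlt2 | hge
    · have hk1 : 1 ≤ k + 1 := by omega
      have hk2 : k + 1 ≤ n := by omega
      have hkne : ¬ (k + 1 = 0 ∨ k + 1 = n+1) := by omega
      rw [hZZpolar (k+1) hk1 hk2,
        show -((((k+1:ℕ):ℝ)-1)*γ) = -((k:ℝ)*γ) from by push_cast; ring]
      rcases Nat.even_or_odd k with he | ho
      · have hno : ¬ Odd k := by simp [Nat.not_odd_iff_even.mpr he]
        have ho1 : Odd (k+1) := Even.add_one he
        simp only [hqq, if_neg hkne, if_pos ho1, invG, if_neg hno]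
        rw [show eθ ((k:ℝ)*γ) * (((rr (k+1) : ℝ):ℂ) * eθ (-((k:ℝ)*γ)))
            = ((rr (k+1) : ℝ):ℂ) * (eθ ((k:ℝ)*γ) * eθ (-((k:ℝ)*γ))) from by ring, eθ_mul,
          add_neg_cancel, eθ_zero, mul_one]
        apply Complex.ext
        · simp
        · simp
      · have hno1 : ¬ Odd (k+1) := by simp [Nat.odd_add_one, ho]
        simp only [hqq, if_neg hkne, if_neg hno1, invG, if_pos ho]
        rw [show eθ (((k:ℝ)-1)*γ) * (((rr (k+1) : ℝ):ℂ) * eθ (-((k:ℝ)*γ)))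
            = ((rr (k+1) : ℝ):ℂ) * (eθ (((k:ℝ)-1)*γ) * eθ (-((k:ℝ)*γ))) from by ring, eθ_mul,
          show ((k:ℝ)-1)*γ + -((k:ℝ)*γ) = -γ from by ring, map_mul, Complex.conj_ofReal,
          conj_eθ, neg_neg]
        apply Complex.ext
        · simp [Complex.re_ofReal_mul]
        · simp [Complex.im_ofReal_mul]
    · have hkn : k = n := by omega
      subst hkn
      have hkne : (n + 1 = 0 ∨ n + 1 = n+1) := Or.inr rfl
      simp only [hqq, if_pos hkne, invG, if_neg hnodd]
      rw [hZZlast,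
        show eθ ((n:ℝ)*γ) * ((ρ:ℂ) * eθ (β - (n:ℝ)*γ))
          = (ρ:ℂ) * (eθ ((n:ℝ)*γ) * eθ (β - (n:ℝ)*γ)) from by ring, eθ_mul,
        show (n:ℝ)*γ + (β - (n:ℝ)*γ) = β from by ring]
      exact hpolar
  -- differences
  have hZZdiff : ∀ k, ZZ (k+1) - ZZ k = ((tt (k+1) - tt k : ℝ):ℂ) * DD := by
    intro k
    simp only [hZZ]
    push_cast
    ring
  have hΔ : ∀ k, k ≤ n → 0 < tt (k+1) - tt k := by
    intro k hk
    linarith [httmono k hk]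
  have muleθ : ∀ (θ φ c : ℝ), eθ θ * ((c:ℂ) * eθ φ) = (c:ℂ) * eθ (θ + φ) := by
    intro θ φ c
    rw [← eθ_mul]
    ring
  have hsinβγ : Real.sin (β - γ) < 0 := by
    have h1 := Real.sin_pos_of_pos_of_lt_pi (x := γ - β) (by linarith) (by linarith)
    rw [show γ - β = -(β-γ) from by ring, Real.sin_neg] at h1
    linarith
  have hsinβ : 0 < Real.sin β := Real.sin_pos_of_pos_of_lt_pi hβ0 (by linarith)
  have E1 : ∀ k, k ≤ n → (eθ (((k:ℝ)-1)*γ) * ZZ k).im ≤ 0 := by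
    intro k hk
    rcases Nat.eq_zero_or_pos k with rfl | hkpos
    · rw [hZZ0, hpolar, muleθ, Complex.im_ofReal_mul, eθ_im,
        show (((0:ℕ):ℝ)-1)*γ + β = β - γ from by push_cast; ring]
      exact le_of_lt (mul_neg_of_pos_of_neg hρ0 hsinβγ)
    · rw [hZZpolar k hkpos hk, muleθ, add_neg_cancel, eθ_zero, mul_one,
        Complex.ofReal_im]
  have E2 : ∀ k, k ≤ n → (eθ (((k:ℝ)-1)*γ) * ZZ (k+1)).im < 0 := by
    intro k hk
    rcases Nat.lt_or_ge k n with hlt2 | hge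
    · rw [hZZpolar (k+1) (by omega) (by omega),
        show -((((k+1:ℕ):ℝ)-1)*γ) = -((k:ℝ)*γ) from by push_cast; ring, muleθ,
        show ((k:ℝ)-1)*γ + -((k:ℝ)*γ) = -γ from by ring, Complex.im_ofReal_mul, eθ_im,
        Real.sin_neg]
      have := hrrpos (k+1) (by omega) (by omega)
      nlinarith
    · have hkn : k = n := by omega
      subst hkn
      rw [hZZlast, muleθ, Complex.im_ofReal_mul, eθ_im,
        show ((n:ℝ)-1)*γ + (β - (n:ℝ)*γ) = β - γ from by ring]
      exact mul_neg_of_pos_of_neg hρ0 hsinβγ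
  have E3 : ∀ k, k ≤ n → 0 < (eθ ((k:ℝ)*γ) * ZZ k).im := by
    intro k hk
    rcases Nat.eq_zero_or_pos k with rfl | hkpos
    · rw [hZZ0, hpolar, muleθ, Complex.im_ofReal_mul, eθ_im,
        show ((0:ℕ):ℝ)*γ + β = β from by push_cast; ring]
      exact mul_pos hρ0 hsinβ
    · rw [hZZpolar k hkpos hk, muleθ,
        show (k:ℝ)*γ + -(((k:ℝ)-1)*γ) = γ from by ring, Complex.im_ofReal_mul, eθ_im]
      exact mul_pos (hrrpos k hkpos hk) hsinγ
  have E4 : ∀ k, k ≤ n → 0 ≤ (eθ ((k:ℝ)*γ) * ZZ (k+1)).im := by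
    intro k hk
    rcases Nat.lt_or_ge k n with hlt2 | hge
    · rw [hZZpolar (k+1) (by omega) (by omega),
        show -((((k+1:ℕ):ℝ)-1)*γ) = -((k:ℝ)*γ) from by push_cast; ring, muleθ,
        add_neg_cancel, eθ_zero, mul_one, Complex.ofReal_im]
    · have hkn : k = n := by omega
      subst hkn
      rw [hZZlast, muleθ, Complex.im_ofReal_mul, eθ_im,
        show (n:ℝ)*γ + (β - (n:ℝ)*γ) = β from by ring]
      exact le_of_lt (mul_pos hρ0 hsinβ)
  -- segments lie in the wedge
  have hsegs : ∀ k, k ≤ n → ∀ t : ℝ, 0 < t → t < 1 →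
      (1 - t) • qq k + t • qq (k+1) ∈ wedge γ := by
    intro k hk t ht0 ht1
    have hW : toC ((1 - t) • qq k + t • qq (k+1))
        = invG γ k (((1-t : ℝ):ℂ) * ZZ k + ((t:ℝ):ℂ) * ZZ (k+1)) := by
      rw [toC_add, toC_smul, toC_smul, hfold1 k hk, hfold2 k hk,
        ← invG_real γ k (1-t) (ZZ k), ← invG_real γ k t (ZZ (k+1)), ← invG_add]
    have expand : ∀ θ:ℝ, (eθ θ * (((1-t : ℝ):ℂ) * ZZ k + ((t:ℝ):ℂ) * ZZ (k+1))).im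
        = (1-t) * (eθ θ * ZZ k).im + t * (eθ θ * ZZ (k+1)).im := by
      intro θ
      rw [mul_add, Complex.add_im,
        show eθ θ * (((1-t : ℝ):ℂ) * ZZ k) = ((1-t : ℝ):ℂ) * (eθ θ * ZZ k) from by ring,
        show eθ θ * (((t : ℝ):ℂ) * ZZ (k+1)) = ((t : ℝ):ℂ) * (eθ θ * ZZ (k+1)) from by ring,
        Complex.im_ofReal_mul, Complex.im_ofReal_mul]
    apply mem_wedge_of hγ0 hγ1 k _ hW
    · rw [expand]
      have a1 := E1 k hk
      have a2 := E2 k hk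
      have h1 := mul_nonpos_of_nonneg_of_nonpos (by linarith : (0:ℝ) ≤ 1 - t) a1
      have h2 := mul_neg_of_pos_of_neg ht0 a2
      linarith
    · rw [expand]
      have a3 := E3 k hk
      have a4 := E4 k hk
      have h1 := mul_pos (by linarith : (0:ℝ) < 1 - t) a3
      have h2 := mul_nonneg (le_of_lt ht0) a4
      linarith
  -- consecutive points are distinct
  have hdistinct : ∀ k, k ≤ n → qq k ≠ qq (k+1) := by
    intro k hk hcon
    have h1 := congrArg toC hcon
    rw [hfold1 k hk, hfold2 k hk] at h1
    have h2 := invG_inj γ k h1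
    have h3 : ZZ (k+1) - ZZ k = 0 := by rw [h2]; ring
    rw [hZZdiff] at h3
    rcases mul_eq_zero.mp h3 with h4 | h4
    · have h5 : tt (k+1) - tt k = 0 := by exact_mod_cast h4
      linarith [hΔ k hk]
    · exact hDDne h4
  -- bounce points are not the vertex
  have hvert : ∀ k, 1 ≤ k → k ≤ n → qq k ≠ 0 := by
    intro k h1 h2 hcon
    have h3 := congrArg (fun v => Complex.abs (toC v)) hcon
    simp only [toC_zero, map_zero] at h3
    rw [hfold1 k h2, invG_abs, hZZpolar k h1 h2, map_mul, Complex.abs_ofReal,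
      abs_eθ, mul_one, abs_of_pos (hrrpos k h1 h2)] at h3
    exact ne_of_gt (hrrpos k h1 h2) h3
  -- on the correct lines
  have honline : ∀ k, 1 ≤ k → k ≤ n → onBoundary γ (decide (Odd k)) (qq k) := by
    intro k h1 h2
    have hkne : ¬ (k = 0 ∨ k = n+1) := by omega
    rcases Nat.even_or_odd k with he | ho
    · have hno : ¬ Odd k := by simp [Nat.not_odd_iff_even.mpr he]
      simp only [hqq, if_neg hkne, if_neg hno, onBoundary]
      rw [if_neg (by simpa using hno)]
      simp only [pt_0, pt_1]
      rw [Real.tan_eq_sin_div_cos]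
      field_simp
    · simp only [hqq, if_neg hkne, if_pos ho, onBoundary]
      rw [if_pos (by simpa using ho)]
      simp
  -- alternation
  have halt : ∀ k, 1 ≤ k → k < n → (decide (Odd (k+1))) = !(decide (Odd k)) := by
    intro k _ _
    rcases Nat.even_or_odd k with he | ho
    · have hno : ¬ Odd k := by simp [Nat.not_odd_iff_even.mpr he]
      have h1 : Odd (k+1) := Even.add_one he
      simp [h1, hno]
    · have h1 : ¬ Odd (k+1) := by simp [Nat.odd_add_one, ho]
      simp [h1, ho]
  -- reflection law
  have hAbsDD : 0 < Complex.abs DD := Complex.abs.pos hDDne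
  have hrefl : ∀ k, 1 ≤ k → k ≤ n →
      (‖qq (k+1) - qq k‖)⁻¹ • (qq (k+1) - qq k) =
        reflDir (lineDir γ (decide (Odd k))) ((‖qq k - qq (k-1)‖)⁻¹ • (qq k - qq (k-1))) := by
    intro k h1 h2
    obtain ⟨i, rfl⟩ : ∃ i, k = i + 1 := ⟨k-1, by omega⟩
    simp only [Nat.add_sub_cancel]
    have hseg1 : toC (qq (i+1+1)) - toC (qq (i+1))
        = ((tt (i+1+1) - tt (i+1) : ℝ):ℂ) * invG γ (i+1) DD := by
      rw [hfold2 (i+1) h2, hfold1 (i+1) h2, ← invG_sub, hZZdiff, invG_real]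
    have hseg0 : toC (qq (i+1)) - toC (qq i)
        = ((tt (i+1) - tt i : ℝ):ℂ) * invG γ i DD := by
      rw [hfold2 i (by omega), hfold1 i (by omega), ← invG_sub, hZZdiff, invG_real]
    have hn1 : ‖qq (i+1+1) - qq (i+1)‖ = (tt (i+1+1) - tt (i+1)) * Complex.abs DD := by
      rw [← abs_toC, toC_sub, hseg1, map_mul, Complex.abs_ofReal, invG_abs,
        abs_of_pos (hΔ (i+1) h2)]
    have hn0 : ‖qq (i+1) - qq i‖ = (tt (i+1) - tt i) * Complex.abs DD := by
      rw [← abs_toC, toC_sub, hseg0, map_mul, Complex.abs_ofReal, invG_abs,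
        abs_of_pos (hΔ i (by omega))]
    apply toC_inj
    rw [toC_smul, toC_sub, refl_complex, toC_smul, toC_sub, hseg1, hseg0, hn1, hn0]
    have hΔ1 : (tt (i+1+1) - tt (i+1)) ≠ 0 := ne_of_gt (hΔ (i+1) h2)
    have hΔ0 : (tt (i+1) - tt i) ≠ 0 := ne_of_gt (hΔ i (by omega))
    have hAne : Complex.abs DD ≠ 0 := ne_of_gt hAbsDD
    have hscal : ∀ (d : ℝ) (X : ℂ), d ≠ 0 →
        ((((d * Complex.abs DD)⁻¹ : ℝ)):ℂ) * (((d : ℝ):ℂ) * X)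
          = (((Complex.abs DD)⁻¹ : ℝ):ℂ) * X := by
      intro d X hd
      have hdc : (d:ℂ) ≠ 0 := by exact_mod_cast hd
      have hAc : ((Complex.abs DD : ℝ):ℂ) ≠ 0 := by exact_mod_cast hAne
      push_cast
      field_simp
    rw [hscal _ _ hΔ1, hscal _ _ hΔ0, ← invG_real γ (i+1), ← invG_real γ i,
      show (if decide (Odd (i+1)) = true then (0:ℝ) else γ)
        = (if Odd (i+1) then (0:ℝ) else γ) from by simp]
    exact invG_refl γ i _
  -- assemble the structure
  exact ⟨{ q := qq
           horiz := fun k => decide (Odd k)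
           alt := halt
           start := by simp [hqq]
           closes := by simp [hqq]
           distinct := hdistinct
           bounce_ne_vertex := hvert
           onLine := honline
           segs_in_wedge := hsegs
           reflects := hrefl }⟩

end seven
/-- For every integer `m ≥ 1`, every `γ ∈ (0, π/2)` and every point `p` of the wedge
`W_γ`, there exists a closed `2m`-bounce billiard path based at `p` if and only if
`γ < π/(2m)`. -/
theorem exists_closed_even_bounce_iff (m : ℕ) (hm : 1 ≤ m) (γ : ℝ)
    (hγ0 : 0 < γ) (hγ1 : γ < π / 2) (p : E2) (hp : p ∈ wedge γ) :
    Nonempty (ClosedBounce γ p (2 * m)) ↔ γ < π / (2 * m) := by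
  have h2m : (0:ℝ) < 2 * (m:ℝ) := by
    have : (1:ℝ) ≤ (m:ℝ) := by exact_mod_cast hm
    linarith
  constructor
  · rintro ⟨P⟩
    have h := forward_dir hm hγ0 hγ1 hp P
    rw [lt_div_iff₀ h2m]
    linarith
  · intro h
    rw [lt_div_iff₀ h2m] at h
    exact backward_dir hm hγ0 hγ1 hp (by linarith)

end
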